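/- arXiv:1311.0451 — 3 statements merged into one kernel-verified Lean document; each statement's English description precedes it below -/
import Mathlib

section
/- Let (X,f) be a non-trivial non-wandering dynamical system with the shadowing property. If (X,f) is weakly mixing, then for every d ≥ 1 and all nonempty open subsets U_0, U_1, …, U_d of X, there exist m ∈ ℕ, a closed f^m-invariant subset Y of X, and a factor map π : (Y, f^m) → ({0,1,…,d}^ℕ, σ) onto the full shift on d+1 symbols such that π^{-1}(C[i]) ⊆ U_i for all i = 0,…,d, where C[i] is the cylinder of sequences starting with symbol i. -/
open Set Function

variable {X : Type*}

/-- A `δ`-pseudo-orbit of `f`. -/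
def IsPseudoOrbit [MetricSpace X] (f : X → X) (δ : ℝ) (x : ℕ → X) : Prop :=
  ∀ n : ℕ, dist (f (x n)) (x (n + 1)) < δ

/-- `z` ε-traces the sequence `x`. -/
def Traces [MetricSpace X] (f : X → X) (ε : ℝ) (z : X) (x : ℕ → X) : Prop :=
  ∀ n : ℕ, dist (f^[n] z) (x n) < ε

/-- The shadowing property. -/
def HasShadowing [MetricSpace X] (f : X → X) : Prop :=
  ∀ ε > (0 : ℝ), ∃ δ > (0 : ℝ), ∀ x : ℕ → X, IsPseudoOrbit f δ x → ∃ z : X, Traces f ε z x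

/-- The shadowing property of the restriction of `f` to an invariant set `S`. -/
def HasShadowingOn [MetricSpace X] (f : X → X) (S : Set X) : Prop :=
  ∀ ε > (0 : ℝ), ∃ δ > (0 : ℝ), ∀ x : ℕ → X, (∀ n, x n ∈ S) → IsPseudoOrbit f δ x →
    ∃ z ∈ S, Traces f ε z x

/-- Non-wandering point. -/
def NonWanderingPt [TopologicalSpace X] (f : X → X) (x : X) : Prop :=
  ∀ U ∈ nhds x, ∃ k : ℕ, 1 ≤ k ∧ ∃ y ∈ U, f^[k] y ∈ U

/-- The (forward) orbit of a point. -/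
def orbitSet (f : X → X) (x : X) : Set X := Set.range fun n : ℕ => f^[n] x

/-- Recurrent point. -/
def RecurrentPt [TopologicalSpace X] (f : X → X) (x : X) : Prop :=
  ∀ U ∈ nhds x, ∃ k : ℕ, 1 ≤ k ∧ f^[k] x ∈ U

/-- Minimal point: every point of the orbit closure has `x` in its own orbit closure,
i.e. the orbit closure of `x` is a minimal set. -/
def MinimalPt [TopologicalSpace X] (f : X → X) (x : X) : Prop :=
  ∀ y ∈ closure (orbitSet f x), x ∈ closure (orbitSet f y)

/-- Regularly recurrent point. -/
def RegRecPt [TopologicalSpace X] (f : X → X) (x : X) : Prop :=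
  ∀ U ∈ nhds x, ∃ k : ℕ, 1 ≤ k ∧ ∀ n : ℕ, f^[k * n] x ∈ U

/-- Equicontinuity of the family of iterates of `f`. -/
def EquicontinuousMap [MetricSpace X] (f : X → X) : Prop :=
  ∀ ε > (0 : ℝ), ∃ δ > (0 : ℝ), ∀ x y : X, dist x y < δ →
    ∀ n : ℕ, dist (f^[n] x) (f^[n] y) < ε

/-- `u` is a sensitive point of the subsystem on `S`. -/
def SensitivePtOn [MetricSpace X] (f : X → X) (S : Set X) (u : X) : Prop :=
  ∃ δ > (0 : ℝ), ∀ U ∈ nhds u, ∃ n : ℕ, ∃ a ∈ U ∩ S, ∃ b ∈ U ∩ S,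
    dist (f^[n] a) (f^[n] b) > δ

/-- `u` is a sensitive point of `(X,f)`. -/
def SensitivePt [MetricSpace X] (f : X → X) (u : X) : Prop :=
  ∃ δ > (0 : ℝ), ∀ U ∈ nhds u, ∃ n : ℕ, ∃ a ∈ U, ∃ b ∈ U,
    dist (f^[n] a) (f^[n] b) > δ

/-- Topological transitivity. -/
def TopTransitive {Y : Type*} [TopologicalSpace Y] (g : Y → Y) : Prop :=
  ∀ U V : Set Y, IsOpen U → U.Nonempty → IsOpen V → V.Nonempty →
    ∃ n : ℕ, 1 ≤ n ∧ (g^[n] '' U ∩ V).Nonempty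

/-- Weak mixing: the product system is transitive. -/
def WeaklyMixing [TopologicalSpace X] (f : X → X) : Prop :=
  TopTransitive (fun p : X × X => (f p.1, f p.2))

/-- Strong mixing. -/
def StronglyMixing {Y : Type*} [TopologicalSpace Y] (g : Y → Y) : Prop :=
  ∀ U V : Set Y, IsOpen U → U.Nonempty → IsOpen V → V.Nonempty →
    ∃ N : ℕ, ∀ n ≥ N, (g^[n] '' U ∩ V).Nonempty

/-- The shift map on the full shift over `d` symbols. -/
def shiftMap (d : ℕ) : (ℕ → Fin d) → (ℕ → Fin d) := fun x n => x (n + 1)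

/-- `π` is a factor map from the subsystem `(Y, f^[m])` onto the full shift on `d` symbols. -/
def FactorOntoShift [TopologicalSpace X] (f : X → X) (m : ℕ) (Y : Set X) (d : ℕ)
    (π : X → (ℕ → Fin d)) : Prop :=
  ContinuousOn π Y ∧ π '' Y = Set.univ ∧ ∀ y ∈ Y, π (f^[m] y) = shiftMap d (π y)

lemma prodMap_iterate (f : X → X) (n : ℕ) (q : X × X) :
    (fun p : X × X => (f p.1, f p.2))^[n] q = (f^[n] q.1, f^[n] q.2) := by
  induction n generalizing q with
  | zero => simp
  | succ n ih =>
    rw [Function.iterate_succ_apply, Function.iterate_succ_apply, Function.iterate_succ_apply]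
    exact ih _

lemma wm_transitive [TopologicalSpace X] {f : X → X} (hwm : WeaklyMixing f) :
    TopTransitive f := by
  intro U V hU hUne hV hVne
  obtain ⟨n, hn, a, ⟨q, hq, hqa⟩, haV⟩ := hwm (U ×ˢ U) (V ×ˢ V) (hU.prod hU) (hUne.prod hUne)
    (hV.prod hV) (hVne.prod hVne)
  rw [prodMap_iterate] at hqa
  exact ⟨n, hn, a.1, ⟨q.1, hq.1, congrArg Prod.fst hqa⟩, haV.1⟩

lemma wm_pair [TopologicalSpace X] {f : X → X} (hf : Continuous f) (hwm : WeaklyMixing f)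
    {U1 V1 U2 V2 : Set X} (hU1 : IsOpen U1) (hU1n : U1.Nonempty) (hV1 : IsOpen V1)
    (hV1n : V1.Nonempty) (hU2 : IsOpen U2) (hU2n : U2.Nonempty) (hV2 : IsOpen V2)
    (hV2n : V2.Nonempty) :
    ∃ U V : Set X, IsOpen U ∧ U.Nonempty ∧ IsOpen V ∧ V.Nonempty ∧
      ∀ k x, x ∈ U → f^[k] x ∈ V →
        (∃ y ∈ U1, f^[k] y ∈ V1) ∧ ∃ y ∈ U2, f^[k] y ∈ V2 := by
  obtain ⟨n, hn, a, ⟨q, hq, hqa⟩, haV⟩ := hwm (U1 ×ˢ V1) (U2 ×ˢ V2) (hU1.prod hV1)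
    (hU1n.prod hV1n) (hU2.prod hV2) (hU2n.prod hV2n)
  rw [prodMap_iterate] at hqa
  have h1 : f^[n] q.1 = a.1 := congrArg Prod.fst hqa
  have h2 : f^[n] q.2 = a.2 := congrArg Prod.snd hqa
  refine ⟨U1 ∩ f^[n] ⁻¹' U2, V1 ∩ f^[n] ⁻¹' V2,
    hU1.inter (hU2.preimage (hf.iterate n)), ⟨q.1, hq.1, by rw [Set.mem_preimage, h1]; exact haV.1⟩,
    hV1.inter (hV2.preimage (hf.iterate n)), ⟨q.2, hq.2, by rw [Set.mem_preimage, h2]; exact haV.2⟩,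
    ?_⟩
  intro k x hxU hxV
  refine ⟨⟨x, hxU.1, hxV.1⟩, ⟨f^[n] x, hxU.2, ?_⟩⟩
  have : f^[k] (f^[n] x) = f^[n] (f^[k] x) := by
    rw [← Function.iterate_add_apply, ← Function.iterate_add_apply, Nat.add_comm]
  rw [this]
  exact hxV.2

lemma wm_list [TopologicalSpace X] [Nonempty X] {f : X → X} (hf : Continuous f)
    (hwm : WeaklyMixing f) :
    ∀ L : List (Set X × Set X),
      (∀ q ∈ L, IsOpen q.1 ∧ q.1.Nonempty ∧ IsOpen q.2 ∧ q.2.Nonempty) →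
      ∃ U V : Set X, IsOpen U ∧ U.Nonempty ∧ IsOpen V ∧ V.Nonempty ∧
        ∀ k x, x ∈ U → f^[k] x ∈ V → ∀ q ∈ L, ∃ y ∈ q.1, f^[k] y ∈ q.2 := by
  intro L
  induction L with
  | nil =>
    intro _
    exact ⟨Set.univ, Set.univ, isOpen_univ, Set.univ_nonempty, isOpen_univ, Set.univ_nonempty,
      fun k x _ _ q hq => absurd hq List.not_mem_nil⟩
  | cons q L ih =>
    intro hL
    obtain ⟨U, V, hU, hUn, hV, hVn, hprop⟩ := ih (fun r hr => hL r (List.mem_cons_of_mem _ hr))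
    obtain ⟨hq1, hq1n, hq2, hq2n⟩ := hL q List.mem_cons_self
    obtain ⟨U', V', hU', hU'n, hV', hV'n, hprop'⟩ :=
      wm_pair hf hwm hq1 hq1n hq2 hq2n hU hUn hV hVn
    refine ⟨U', V', hU', hU'n, hV', hV'n, ?_⟩
    intro k x hxU hxV r hr
    obtain ⟨h1, h2⟩ := hprop' k x hxU hxV
    rcases List.mem_cons.mp hr with h | h
    · exact h ▸ h1
    · obtain ⟨y, hyU, hyV⟩ := h2
      exact hprop k y hyU hyV r h

lemma open_diff_finite_nonempty [MetricSpace X] {f : X → X} (hwm : WeaklyMixing f)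
    (hX : ∃ a b : X, a ≠ b) {W : Set X} (hW : IsOpen W) (hWn : W.Nonempty)
    {F : Set X} (hF : F.Finite) : (W \ F).Nonempty := by
  rw [Set.nonempty_iff_ne_empty]
  intro hcon
  have hWF : W ⊆ F := fun w hw => by
    by_contra hwF
    exact Set.eq_empty_iff_forall_notMem.mp hcon w ⟨hw, hwF⟩
  have hWfin : W.Finite := hF.subset hWF
  obtain ⟨x, hx⟩ := hWn
  have hxo : IsOpen ({x} : Set X) := by
    have hxeq : ({x} : Set X) = W ∩ (W \ {x})ᶜ := by
      ext w
      simp only [Set.mem_singleton_iff, Set.mem_inter_iff, Set.mem_compl_iff, Set.mem_diff,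
        Set.mem_singleton_iff]
      constructor
      · rintro rfl; exact ⟨hx, fun h => h.2 rfl⟩
      · rintro ⟨hwW, h⟩
        by_contra hne
        exact h ⟨hwW, hne⟩
    rw [hxeq]
    exact hW.inter hWfin.diff.isClosed.isOpen_compl
  obtain ⟨a, b, hab⟩ := hX
  obtain ⟨A, B, hA, hB, haA, hbB, hAB⟩ := t2_separation hab
  obtain ⟨n, hn, c, ⟨q, hq, hqc⟩, hcV⟩ := hwm (({x} : Set X) ×ˢ {x}) (A ×ˢ B)
    (hxo.prod hxo) ((Set.singleton_nonempty x).prod (Set.singleton_nonempty x))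
    (hA.prod hB) (Set.Nonempty.prod ⟨a, haA⟩ ⟨b, hbB⟩)
  rw [prodMap_iterate] at hqc
  have hq1 : q.1 = x := hq.1
  have hq2 : q.2 = x := hq.2
  have h1 : f^[n] x ∈ A := by
    rw [← hq1]
    have := congrArg Prod.fst hqc
    simp only at this
    rw [this]; exact hcV.1
  have h2 : f^[n] x ∈ B := by
    rw [← hq2]
    have := congrArg Prod.snd hqc
    simp only at this
    rw [this]; exact hcV.2
  exact Set.disjoint_left.mp hAB h1 h2

lemma pick_inj [MetricSpace X] {f : X → X} (hwm : WeaklyMixing f) (hX : ∃ a b : X, a ≠ b) :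
    ∀ (k : ℕ) (U : Fin k → Set X), (∀ i, IsOpen (U i) ∧ (U i).Nonempty) →
      ∃ p : Fin k → X, Function.Injective p ∧ ∀ i, p i ∈ U i := by
  intro k
  induction k with
  | zero => exact fun U _ => ⟨Fin.elim0, fun i => i.elim0, fun i => i.elim0⟩
  | succ k ih =>
    intro U hU
    obtain ⟨p, hpinj, hpmem⟩ := ih (fun i => U i.castSucc) (fun i => hU i.castSucc)
    obtain ⟨x, hxU, hxr⟩ : ∃ x, x ∈ U (Fin.last k) ∧ x ∉ Set.range p := by
      obtain ⟨x, hx⟩ := open_diff_finite_nonempty hwm hX (hU (Fin.last k)).1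
        (hU (Fin.last k)).2 (Set.finite_range p)
      exact ⟨x, hx.1, hx.2⟩
    refine ⟨Fin.snoc p x, ?_, ?_⟩
    · intro i j hij
      rcases Fin.eq_castSucc_or_eq_last i with ⟨i', rfl⟩ | rfl <;>
        rcases Fin.eq_castSucc_or_eq_last j with ⟨j', rfl⟩ | rfl
      · rw [Fin.snoc_castSucc, Fin.snoc_castSucc] at hij
        exact congrArg Fin.castSucc (hpinj hij)
      · rw [Fin.snoc_castSucc, Fin.snoc_last] at hij
        exact absurd ⟨i', hij⟩ hxr
      · rw [Fin.snoc_last, Fin.snoc_castSucc] at hij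
        exact absurd ⟨j', hij.symm⟩ hxr
      · rfl
    · intro i
      rcases Fin.eq_castSucc_or_eq_last i with ⟨i', rfl⟩ | rfl
      · rw [Fin.snoc_castSucc]; exact hpmem i'
      · rw [Fin.snoc_last]; exact hxU

theorem weak_mixing_shift_factor_in_open_sets [MetricSpace X] [CompactSpace X]
    (f : X → X) (hf : Continuous f) (hX : ∃ x y : X, x ≠ y)
    (hnw : ∀ x : X, NonWanderingPt f x) (hsh : HasShadowing f)
    (hwm : WeaklyMixing f) :
    ∀ d : ℕ, 1 ≤ d → ∀ U : Fin (d + 1) → Set X,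
      (∀ i, IsOpen (U i) ∧ (U i).Nonempty) →
      ∃ m : ℕ, 1 ≤ m ∧ ∃ Y : Set X, IsClosed Y ∧ Set.MapsTo f^[m] Y Y ∧
        ∃ π : X → (ℕ → Fin (d + 1)), FactorOntoShift f m Y (d + 1) π ∧
          ∀ i : Fin (d + 1), ∀ y ∈ Y, π y 0 = i → y ∈ U i := by
  classical
  intro d hd U hU
  have hXne : Nonempty X := ⟨hX.choose⟩
  -- distinct points p i ∈ U i
  obtain ⟨p, hpinj, hpmem⟩ := pick_inj hwm hX (d + 1) U hU
  -- minimal distance between the points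
  have hpairs : (Finset.univ.filter
      (fun q : Fin (d + 1) × Fin (d + 1) => q.1 ≠ q.2)).Nonempty := by
    refine ⟨(⟨0, by omega⟩, ⟨1, by omega⟩), ?_⟩
    simp only [Finset.mem_filter, Finset.mem_univ, true_and]
    intro h
    have hv : (0 : ℕ) = 1 := congrArg Fin.val h
    omega
  set r : ℝ := Finset.inf' _ hpairs (fun q => dist (p q.1) (p q.2)) with hr_def
  have hrpos : 0 < r := by
    rw [hr_def, Finset.lt_inf'_iff]
    intro q hq
    rw [Finset.mem_filter] at hq
    exact dist_pos.mpr fun h => hq.2 (hpinj h)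
  have hrle : ∀ i j : Fin (d + 1), i ≠ j → r ≤ dist (p i) (p j) := by
    intro i j hij
    have hmem : (i, j) ∈ Finset.univ.filter
        (fun q : Fin (d + 1) × Fin (d + 1) => q.1 ≠ q.2) := by
      simp only [Finset.mem_filter, Finset.mem_univ, true_and]
      exact hij
    exact Finset.inf'_le (fun q => dist (p q.1) (p q.2)) hmem
  -- radius ε
  have hballex : ∀ i, ∃ e > 0, Metric.ball (p i) e ⊆ U i := fun i =>
    Metric.isOpen_iff.mp (hU i).1 (p i) (hpmem i)
  choose e he hesub using hballex
  have hFinne : (Finset.univ : Finset (Fin (d + 1))).Nonempty := Finset.univ_nonempty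
  set ε : ℝ := min (r / 4) (Finset.univ.inf' hFinne e / 2) with hε_def
  have hinfpos : 0 < Finset.univ.inf' hFinne e := by
    rw [Finset.lt_inf'_iff]; exact fun i _ => he i
  have hεpos : 0 < ε := lt_min (by linarith) (by linarith)
  have hε3r : 3 * ε < r := by
    have h1 : ε ≤ r / 4 := min_le_left _ _
    linarith
  have hεsub : ∀ i, Metric.closedBall (p i) (3 * ε / 2) ⊆ U i := by
    intro i
    have h1 : ε ≤ Finset.univ.inf' hFinne e / 2 := min_le_right _ _
    have h2 : Finset.univ.inf' hFinne e ≤ e i := Finset.inf'_le _ (Finset.mem_univ i)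
    refine Set.Subset.trans ?_ (hesub i)
    intro w hw
    rw [Metric.mem_closedBall] at hw
    rw [Metric.mem_ball]
    have := he i
    linarith
  -- shadowing constant
  obtain ⟨δ0, hδ0pos, hδ0⟩ := hsh ε hεpos
  set δ : ℝ := min δ0 ε with hδ_def
  have hδpos : 0 < δ := lt_min hδ0pos hεpos
  have hδε : δ ≤ ε := min_le_right _ _
  have hshad : ∀ x : ℕ → X, IsPseudoOrbit f δ x → ∃ z, Traces f ε z x := fun x hx =>
    hδ0 x fun n => lt_of_lt_of_le (hx n) (min_le_left _ _)
  -- common transition time m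
  have hL : ∀ q ∈ (Finset.univ : Finset (Fin (d + 1) × Fin (d + 1))).toList.map
      (fun q => (Metric.ball (p q.1) (δ / 2), Metric.ball (p q.2) (δ / 2))),
      IsOpen q.1 ∧ q.1.Nonempty ∧ IsOpen q.2 ∧ q.2.Nonempty := by
    intro q hq
    rw [List.mem_map] at hq
    obtain ⟨a, -, rfl⟩ := hq
    exact ⟨Metric.isOpen_ball, Metric.nonempty_ball.mpr (by linarith),
      Metric.isOpen_ball, Metric.nonempty_ball.mpr (by linarith)⟩
  obtain ⟨U', V', hU', hU'n, hV', hV'n, hprop⟩ := wm_list hf hwm _ hL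
  obtain ⟨m, hm, w, ⟨w0, hw0, hw0w⟩, hwV⟩ := wm_transitive hwm U' V' hU' hU'n hV' hV'n
  have hmpos : 0 < m := hm
  have htrans : ∀ i j : Fin (d + 1), ∃ y, dist y (p i) < δ / 2 ∧
      dist (f^[m] y) (p j) < δ / 2 := by
    intro i j
    have hmem : (Metric.ball (p i) (δ / 2), Metric.ball (p j) (δ / 2)) ∈
        (Finset.univ : Finset (Fin (d + 1) × Fin (d + 1))).toList.map
        (fun q => (Metric.ball (p q.1) (δ / 2), Metric.ball (p q.2) (δ / 2))) := by
      rw [List.mem_map]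
      exact ⟨(i, j), Finset.mem_toList.mpr (Finset.mem_univ _), rfl⟩
    obtain ⟨y, hy1, hy2⟩ := hprop m w0 hw0 (hw0w ▸ hwV) _ hmem
    exact ⟨y, Metric.mem_ball.mp hy1, Metric.mem_ball.mp hy2⟩
  choose z hz1 hz2 using htrans
  -- pseudo-orbits
  set xseq : (ℕ → Fin (d + 1)) → ℕ → X :=
    fun s k => f^[k % m] (z (s (k / m)) (s (k / m + 1))) with hxseq_def
  have hxpo : ∀ s, IsPseudoOrbit f δ (xseq s) := by
    intro s k
    have hk : m * (k / m) + k % m = k := Nat.div_add_mod k m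
    rcases lt_or_ge (k % m + 1) m with hlt | hge
    · have hk1 : k + 1 = m * (k / m) + (k % m + 1) := by
        conv_lhs => rw [← hk]
        exact Nat.add_assoc _ _ _
      have h1 : (k + 1) % m = k % m + 1 := by
        rw [hk1, Nat.mul_add_mod, Nat.mod_eq_of_lt hlt]
      have h2 : (k + 1) / m = k / m := by
        rw [hk1, Nat.mul_add_div hmpos, Nat.div_eq_of_lt hlt, Nat.add_zero]
      have heq : f (xseq s k) = xseq s (k + 1) := by
        simp only [hxseq_def, h1, h2]
        rw [← Function.iterate_succ_apply' f]
      rw [heq, dist_self]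
      exact hδpos
    · have hmm : k % m = m - 1 := by
        have := Nat.mod_lt k hmpos
        omega
      have h' : k % m + 1 = m := by omega
      have hk1 : k + 1 = m * (k / m) + m := by
        conv_lhs => rw [← hk]
        rw [Nat.add_assoc, h']
      have h1 : (k + 1) % m = 0 := by
        rw [hk1, Nat.mul_add_mod, Nat.mod_self]
      have h2 : (k + 1) / m = k / m + 1 := by
        rw [hk1, Nat.mul_add_div hmpos, Nat.div_self hmpos]
      have heq : f (xseq s k) = f^[m] (z (s (k / m)) (s (k / m + 1))) := by
        simp only [hxseq_def]
        rw [← Function.iterate_succ_apply' f, Nat.succ_eq_add_one, h']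
      have heq2 : xseq s (k + 1) = z (s (k / m + 1)) (s (k / m + 2)) := by
        simp only [hxseq_def, h1, h2, Function.iterate_zero_apply]
      rw [heq, heq2]
      have t1 := hz2 (s (k / m)) (s (k / m + 1))
      have t2 := hz1 (s (k / m + 1)) (s (k / m + 2))
      have t3 := dist_triangle (f^[m] (z (s (k / m)) (s (k / m + 1))))
        (p (s (k / m + 1))) (z (s (k / m + 1)) (s (k / m + 2)))
      rw [dist_comm (p (s (k / m + 1)))] at t3
      linarith
  choose Z hZ using fun s => hshad (xseq s) (hxpo s)
  -- tracing estimate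
  have est : ∀ (s : ℕ → Fin (d + 1)) (n : ℕ),
      dist (f^[m * n] (Z s)) (p (s n)) < 3 * ε / 2 := by
    intro s n
    have h1 := hZ s (m * n)
    have h2 : xseq s (m * n) = z (s n) (s (n + 1)) := by
      simp only [hxseq_def]
      rw [Nat.mul_mod_right, Nat.mul_div_cancel_left n hmpos, Function.iterate_zero_apply]
    rw [h2] at h1
    have h3 := hz1 (s n) (s (n + 1))
    have t := dist_triangle (f^[m * n] (Z s)) (z (s n) (s (n + 1))) (p (s n))
    linarith
  -- the subsystem
  set Y : Set X := {y | ∀ n : ℕ, ∃ i, f^[m * n] y ∈ Metric.closedBall (p i) (3 * ε / 2)}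
    with hY_def
  have hYclosed : IsClosed Y := by
    have hYeq : Y = ⋂ n : ℕ, f^[m * n] ⁻¹' (⋃ i, Metric.closedBall (p i) (3 * ε / 2)) := by
      ext y
      simp [hY_def]
    rw [hYeq]
    exact isClosed_iInter fun n =>
      (isClosed_iUnion_of_finite fun i => Metric.isClosed_closedBall).preimage (hf.iterate _)
  have hYmaps : Set.MapsTo f^[m] Y Y := by
    intro y hy n
    obtain ⟨i, hi⟩ := hy (n + 1)
    refine ⟨i, ?_⟩
    rw [← Function.iterate_add_apply, show m * n + m = m * (n + 1) by ring]
    exact hi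
  -- uniqueness of itinerary symbol
  have huniq : ∀ (w' : X) (i j : Fin (d + 1)), w' ∈ Metric.closedBall (p i) (3 * ε / 2) →
      w' ∈ Metric.closedBall (p j) (3 * ε / 2) → i = j := by
    intro w' i j hi hj
    by_contra hij
    have h := hrle i j hij
    rw [Metric.mem_closedBall] at hi hj
    have t := dist_triangle (p i) w' (p j)
    rw [dist_comm (p i) w'] at t
    linarith
  -- the itinerary map
  set π : X → ℕ → Fin (d + 1) := fun y n =>
    if h : ∃ i, f^[m * n] y ∈ Metric.closedBall (p i) (3 * ε / 2) then h.choose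
    else ⟨0, Nat.succ_pos d⟩ with hπ_def
  have hπspec : ∀ y n i, f^[m * n] y ∈ Metric.closedBall (p i) (3 * ε / 2) → π y n = i := by
    intro y n i hi
    have h : ∃ j, f^[m * n] y ∈ Metric.closedBall (p j) (3 * ε / 2) := ⟨i, hi⟩
    simp only [hπ_def, dif_pos h]
    exact huniq _ _ _ h.choose_spec hi
  refine ⟨m, hm, Y, hYclosed, hYmaps, π, ⟨?_, ?_, ?_⟩, ?_⟩
  · -- continuity on Y
    intro y hy
    rw [ContinuousWithinAt, tendsto_pi_nhds]
    intro n
    obtain ⟨i, hi⟩ := hy n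
    have hπy : π y n = i := hπspec y n i hi
    rw [hπy]
    have hW : IsOpen (f^[m * n] ⁻¹' Metric.ball (p i) (3 * ε / 2 + (r - 3 * ε) / 2)) :=
      Metric.isOpen_ball.preimage (hf.iterate _)
    have hyW : y ∈ f^[m * n] ⁻¹' Metric.ball (p i) (3 * ε / 2 + (r - 3 * ε) / 2) := by
      rw [Set.mem_preimage, Metric.mem_ball]
      rw [Metric.mem_closedBall] at hi
      linarith
    have hev : ∀ᶠ y' in nhdsWithin y Y, π y' n = i := by
      filter_upwards [nhdsWithin_le_nhds (hW.mem_nhds hyW), self_mem_nhdsWithin]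
        with y' hy'W hy'Y
      obtain ⟨j, hj⟩ := hy'Y n
      have hji : j = i := by
        by_contra hji
        have h1 := hrle j i hji
        rw [Set.mem_preimage, Metric.mem_ball] at hy'W
        rw [Metric.mem_closedBall] at hj
        have t := dist_triangle (p j) (f^[m * n] y') (p i)
        rw [dist_comm (p j) (f^[m * n] y')] at t
        linarith
      exact hji ▸ hπspec y' n j hj
    exact tendsto_const_nhds.congr' (hev.mono fun _ h => h.symm)
  · -- surjectivity
    ext s
    simp only [Set.mem_univ, iff_true, Set.mem_image]
    refine ⟨Z s, fun n => ⟨s n, Metric.mem_closedBall.mpr (le_of_lt (est s n))⟩, ?_⟩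
    funext n
    exact hπspec _ n (s n) (Metric.mem_closedBall.mpr (le_of_lt (est s n)))
  · -- semiconjugacy
    intro y hy
    funext n
    obtain ⟨i, hi⟩ := hy (n + 1)
    have h1 : π y (n + 1) = i := hπspec y (n + 1) i hi
    have h2 : π (f^[m] y) n = i := by
      apply hπspec
      rw [← Function.iterate_add_apply, show m * n + m = m * (n + 1) by ring]
      exact hi
    show π (f^[m] y) n = π y (n + 1)
    rw [h1, h2]
  · -- cylinders inside the open sets
    intro i y hy h0
    obtain ⟨j, hj⟩ := hy 0
    have hji : π y 0 = j := hπspec y 0 j hj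
    rw [h0] at hji
    rw [← hji] at hj
    apply hεsub i
    simpa using hj
end

section
/- Let (X,f) be a non-trivial non-wandering dynamical system with the shadowing property. If (X,f) is weakly mixing, then it has the strong Property P: for every n ≥ 2 and all nonempty open subsets U_0, …, U_{n-1} of X, there exists N ∈ ℕ such that for every k ≥ 2 and every s ∈ {0,…,n-1}^k there is x ∈ X with f^{(j-1)N}(x) ∈ U_{s(j)} for all j = 1,…,k. -/
open Set Function

variable {X : Type*}

/-- A finite `δ`-chain of length `m` from `a` to `b`. -/
def ChainFD [MetricSpace X] (f : X → X) (δ : ℝ) (m : ℕ) (a b : X) : Prop :=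
  ∃ c : ℕ → X, c 0 = a ∧ c m = b ∧ ∀ t < m, dist (f (c t)) (c (t + 1)) < δ

lemma chainFD_refl [MetricSpace X] (f : X → X) (δ : ℝ) (a : X) : ChainFD f δ 0 a a :=
  ⟨fun _ => a, rfl, rfl, fun t ht => absurd ht (Nat.not_lt_zero t)⟩

lemma chainFD_concat [MetricSpace X] {f : X → X} {δ : ℝ} {m m' : ℕ} {a b e : X}
    (h1 : ChainFD f δ m a b) (h2 : ChainFD f δ m' b e) : ChainFD f δ (m + m') a e := by
  obtain ⟨c1, hc10, hc1m, hc1d⟩ := h1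
  obtain ⟨c2, hc20, hc2m, hc2d⟩ := h2
  refine ⟨fun t => if t < m then c1 t else c2 (t - m), ?_, ?_, ?_⟩
  · by_cases hm : 0 < m
    · simp [hm, hc10]
    · have : m = 0 := by omega
      subst this
      simpa [hc20, ← hc1m] using hc10.symm ▸ rfl
  · have : ¬ (m + m' < m) := by omega
    simp [this, hc2m]
  · intro t ht
    by_cases h : t < m
    · have h1' : (if t < m then c1 t else c2 (t - m)) = c1 t := by simp [h]
      have h2' : (if t + 1 < m then c1 (t + 1) else c2 (t + 1 - m)) = c1 (t + 1) := by
        by_cases h' : t + 1 < m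
        · simp [h']
        · have : t + 1 = m := by omega
          simp [h', this, hc1m, ← hc20]
      simp only [h1', h2']
      exact hc1d t h
    · have h1' : (if t < m then c1 t else c2 (t - m)) = c2 (t - m) := by simp [h]
      have h2' : (if t + 1 < m then c1 (t + 1) else c2 (t + 1 - m)) = c2 (t - m + 1) := by
        have : ¬ (t + 1 < m) := by omega
        have e1 : t + 1 - m = t - m + 1 := by omega
        simp [this, e1]
      simp only [h1', h2']
      exact hc2d (t - m) (by omega)

lemma chainFD_of_orbit [MetricSpace X] {f : X → X} {δ δ' : ℝ} (hδ : 0 < δ)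
    (hδ1 : ∀ u v : X, dist u v < δ' → dist (f u) (f v) < δ / 2) (hδ2 : δ' ≤ δ / 2)
    {y p q : X} {m : ℕ} (hm : 1 ≤ m)
    (hy : dist y p < δ') (hq : dist (f^[m] y) q < δ') : ChainFD f δ m p q := by
  refine ⟨fun t => if t = 0 then p else if t < m then f^[t] y else q, by simp, ?_, ?_⟩
  · have h1 : m ≠ 0 := by omega
    simp [h1]
  · intro t ht
    by_cases h0 : t = 0
    · subst h0
      by_cases h1 : 1 < m
      · have : dist (f p) (f y) < δ / 2 := hδ1 p y (by rwa [dist_comm])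
        simpa [h1, Function.iterate_one] using lt_of_lt_of_le this (by linarith)
      · have hm1 : m = 1 := by omega
        subst hm1
        have e1 : (if (1:ℕ) = 0 then p else if 1 < 1 then f^[1] y else q) = q := by simp
        simp only [if_pos rfl, e1]
        have d1 : dist (f p) (f y) < δ / 2 := hδ1 p y (by rwa [dist_comm])
        have d2 : dist (f y) q < δ' := by simpa using hq
        calc dist (f p) q ≤ dist (f p) (f y) + dist (f y) q := dist_triangle _ _ _
          _ < δ / 2 + δ / 2 := by linarith
          _ = δ := by ring
    · have htm : t < m := ht
      have e1 : (if t = 0 then p else if t < m then f^[t] y else q) = f^[t] y := by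
        simp [h0, htm]
      by_cases h2 : t + 1 < m
      · have e2 : (if t + 1 = 0 then p else if t + 1 < m then f^[t+1] y else q) = f^[t+1] y := by
          simp [h2]
        simp only [e1, e2, ← Function.iterate_succ_apply' f t y]
        simp [hδ]
      · have htm1 : t + 1 = m := by omega
        have e2 : (if t + 1 = 0 then p else if t + 1 < m then f^[t+1] y else q) = q := by
          simp [h2]
        simp only [e1, e2]
        have : f (f^[t] y) = f^[m] y := by
          rw [← Function.iterate_succ_apply' f t y]
          congr 1
        rw [this]
        exact lt_of_lt_of_le hq (by linarith)

lemma chainFD_repeat [MetricSpace X] {f : X → X} {δ : ℝ} {m : ℕ} {a : X}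
    (h : ChainFD f δ m a a) : ∀ k : ℕ, ChainFD f δ (k * m) a a := by
  intro k
  induction k with
  | zero => simpa using chainFD_refl f δ a
  | succ k ih =>
      have : (k + 1) * m = k * m + m := by ring
      rw [this]
      exact chainFD_concat ih h

lemma chainFD_loop_all [MetricSpace X] {f : X → X} {δ : ℝ} {n : ℕ} {a : X}
    (hn : 1 ≤ n) (h1 : ChainFD f δ n a a) (h2 : ChainFD f δ (n + 1) a a) :
    ∀ m : ℕ, n * n ≤ m → ChainFD f δ m a a := by
  intro m hm
  obtain ⟨Q, R, hRn, hmod, hQn⟩ : ∃ Q R : ℕ, R < n ∧ n * Q + R = m ∧ n ≤ Q :=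
    ⟨m / n, m % n, Nat.mod_lt _ (by omega), Nat.div_add_mod m n,
      (Nat.le_div_iff_mul_le (by omega)).mpr (by nlinarith)⟩
  have hrq : R ≤ Q := by omega
  obtain ⟨d, hd⟩ := Nat.exists_eq_add_of_le hrq
  subst hd
  have key : (R + d - R) * n + R * (n + 1) = m := by
    have h' : R + d - R = d := by omega
    rw [h', ← hmod]
    ring
  rw [← key]
  exact chainFD_concat (chainFD_repeat h1 (R + d - R)) (chainFD_repeat h2 R)

lemma div_mod_helper {N j m : ℕ} (hm : m < N) :
    (N * j + m) / N = j ∧ (N * j + m) % N = m := by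
  constructor
  · rw [Nat.add_comm, Nat.add_mul_div_left _ _ (by omega : 0 < N), Nat.div_eq_of_lt hm]
    omega
  · rw [Nat.add_comm, Nat.mul_comm, Nat.add_mul_mod_self_right, Nat.mod_eq_of_lt hm]

lemma pseudo_from_chains [MetricSpace X] {f : X → X} {δ : ℝ} {N : ℕ} (hN : 1 ≤ N)
    (q : ℕ → X) (h : ∀ j : ℕ, ChainFD f δ N (q j) (q (j + 1))) :
    ∃ x : ℕ → X, IsPseudoOrbit f δ x ∧ ∀ j : ℕ, x (j * N) = q j := by
  choose c hc0 hcN hcd using h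
  refine ⟨fun t => c (t / N) (t % N), ?_, ?_⟩
  · intro t
    set j := t / N with hj
    set r := t % N with hr
    have hrN : r < N := Nat.mod_lt _ (by omega)
    have hmod : N * j + r = t := Nat.div_add_mod t N
    by_cases h2 : r + 1 < N
    · have e : t + 1 = N * j + (r + 1) := by omega
      have hd := div_mod_helper (N := N) (j := j) (m := r + 1) h2
      simp only [e, hd.1, hd.2]
      exact hcd j r hrN
    · have hr1 : r + 1 = N := by omega
      have e : t + 1 = N * (j + 1) + 0 := by
        have h' : N * (j + 1) = N * j + N := by ring
        omega
      have hd := div_mod_helper (N := N) (j := j + 1) (m := 0) (by omega)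
      simp only [e, hd.1, hd.2]
      have hcc : c (j + 1) 0 = c j N := by rw [hc0, ← hcN]
      rw [hcc]
      have h' := hcd j r hrN
      rwa [hr1] at h'
  · intro j
    have hd := div_mod_helper (N := N) (j := j) (m := 0) (by omega)
    have e : j * N = N * j + 0 := by ring
    show c (j * N / N) (j * N % N) = q j
    rw [e, hd.1, hd.2, hc0]

lemma prod_iterate {f : X → X} : ∀ (n : ℕ) (a b : X),
    (fun p : X × X => (f p.1, f p.2))^[n] (a, b) = (f^[n] a, f^[n] b) := by
  intro n
  induction n with
  | zero => simp
  | succ n ih =>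
      intro a b
      rw [Function.iterate_succ_apply, Function.iterate_succ_apply,
        Function.iterate_succ_apply]
      exact ih (f a) (f b)

lemma wm_pair_s13 [MetricSpace X] {f : X → X} (hwm : WeaklyMixing f)
    {A B C D : Set X} (hA : IsOpen A) (hAne : A.Nonempty) (hB : IsOpen B) (hBne : B.Nonempty)
    (hC : IsOpen C) (hCne : C.Nonempty) (hD : IsOpen D) (hDne : D.Nonempty) :
    ∃ m : ℕ, 1 ≤ m ∧ (∃ a ∈ A, f^[m] a ∈ B) ∧ (∃ c ∈ C, f^[m] c ∈ D) := by
  obtain ⟨m, hm1, z, hz1, hz2⟩ := hwm (A ×ˢ C) (B ×ˢ D) (hA.prod hC) (hAne.prod hCne)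
    (hB.prod hD) (hBne.prod hDne)
  obtain ⟨w, hw, hfw⟩ := hz1
  rw [prod_iterate m w.1 w.2] at hfw
  refine ⟨m, hm1, ⟨w.1, hw.1, ?_⟩, ⟨w.2, hw.2, ?_⟩⟩
  · rw [← hfw] at hz2; exact hz2.1
  · rw [← hfw] at hz2; exact hz2.2

theorem weak_mixing_strong_property_P [MetricSpace X] [CompactSpace X]
    (f : X → X) (hf : Continuous f) (hX : ∃ x y : X, x ≠ y)
    (hnw : ∀ x : X, NonWanderingPt f x) (hsh : HasShadowing f)
    (hwm : WeaklyMixing f) :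
    ∀ n : ℕ, 2 ≤ n → ∀ U : Fin n → Set X,
      (∀ i, IsOpen (U i) ∧ (U i).Nonempty) →
      ∃ N : ℕ, 1 ≤ N ∧ ∀ k : ℕ, 2 ≤ k → ∀ s : Fin k → Fin n,
        ∃ x : X, ∀ j : Fin k, f^[(j : ℕ) * N] x ∈ U (s j) := by
  intro n hn U hU
  -- choose points and radii for the target sets
  have hpU : ∀ i : Fin n, ∃ p : X, ∃ ε > (0:ℝ), Metric.ball p ε ⊆ U i := by
    intro i
    obtain ⟨p, hp⟩ := (hU i).2
    obtain ⟨ε, hε, hball⟩ := Metric.isOpen_iff.mp (hU i).1 p hp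
    exact ⟨p, ε, hε, hball⟩
  choose p ε' hε' hball using hpU
  have hne : (Finset.univ : Finset (Fin n)).Nonempty := ⟨⟨0, by omega⟩, Finset.mem_univ _⟩
  set ε : ℝ := Finset.univ.inf' hne ε' with hεdef
  have hε : 0 < ε := by
    rw [hεdef, Finset.lt_inf'_iff]
    intro i _
    exact hε' i
  have hεle : ∀ i, ε ≤ ε' i := fun i => Finset.inf'_le _ (Finset.mem_univ i)
  -- shadowing constant
  obtain ⟨δ, hδ, hshad⟩ := hsh ε hε
  -- uniform continuity constant
  have hucf : UniformContinuous f := CompactSpace.uniformContinuous_of_continuous hf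
  obtain ⟨δ₁, hδ₁, hδ₁d⟩ := Metric.uniformContinuous_iff.mp hucf (δ / 2) (by linarith)
  set δ' : ℝ := min δ₁ (δ / 2) with hδ'def
  have hδ'pos : 0 < δ' := lt_min hδ₁ (by linarith)
  have hδ'1 : ∀ u v : X, dist u v < δ' → dist (f u) (f v) < δ / 2 := by
    intro u v huv
    exact hδ₁d (lt_of_lt_of_le huv (min_le_left _ _))
  have hδ'2 : δ' ≤ δ / 2 := min_le_right _ _
  -- the small balls
  set B : Fin n → Set X := fun i => Metric.ball (p i) δ' with hBdef
  have hBopen : ∀ i, IsOpen (B i) := fun i => Metric.isOpen_ball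
  have hBne : ∀ i, (B i).Nonempty := fun i => ⟨p i, Metric.mem_ball_self hδ'pos⟩
  -- preimage sets, nonempty by non-wandering
  set W : Fin n → Set X := fun i => f ⁻¹' (B i) with hWdef
  have hWopen : ∀ i, IsOpen (W i) := fun i => (hBopen i).preimage hf
  have hWne : ∀ i, (W i).Nonempty := by
    intro i
    obtain ⟨k, hk1, y, hy, hfky⟩ := hnw (p i) (B i) ((hBopen i).mem_nhds (Metric.mem_ball_self hδ'pos))
    refine ⟨f^[k - 1] y, ?_⟩
    have : f (f^[k - 1] y) = f^[k] y := by
      rw [← Function.iterate_succ_apply' f (k - 1) y]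
      congr 1
      omega
    simp only [hWdef, Set.mem_preimage, this]
    exact hfky
  -- loops of two consecutive lengths at each p i
  have hloops : ∀ i : Fin n, ∃ ni : ℕ, 1 ≤ ni ∧ ChainFD f δ ni (p i) (p i) ∧
      ChainFD f δ (ni + 1) (p i) (p i) := by
    intro i
    obtain ⟨m, hm1, ⟨a, haA, haB⟩, ⟨c, hcC, hcD⟩⟩ := wm_pair_s13 hwm (hBopen i) (hBne i)
      (hBopen i) (hBne i) (hBopen i) (hBne i) (hWopen i) (hWne i)
    refine ⟨m, hm1, ?_, ?_⟩
    · exact chainFD_of_orbit hδ hδ'1 hδ'2 hm1 haA haB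
    · have hc1 : f^[m + 1] c ∈ B i := by
        rw [Function.iterate_succ_apply' f m c]
        exact hcD
      exact chainFD_of_orbit hδ hδ'1 hδ'2 (by omega) hcC hc1
  choose ni hni1 hniC hniC1 using hloops
  have hloopAll : ∀ i : Fin n, ∀ m : ℕ, ni i * ni i ≤ m → ChainFD f δ m (p i) (p i) :=
    fun i => chainFD_loop_all (hni1 i) (hniC i) (hniC1 i)
  -- connecting chains between pairs
  have hconnect : ∀ i j : Fin n, ∃ m : ℕ, 1 ≤ m ∧ ChainFD f δ m (p i) (p j) := by
    intro i j
    obtain ⟨m, hm1, ⟨a, haA, haB⟩, -⟩ := wm_pair_s13 hwm (hBopen i) (hBne i)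
      (hBopen j) (hBne j) (hBopen i) (hBne i) (hBopen i) (hBne i)
    exact ⟨m, hm1, chainFD_of_orbit hδ hδ'1 hδ'2 hm1 haA haB⟩
  choose mm hmm1 hmmC using hconnect
  -- the uniform time N
  set N : ℕ := (Finset.univ.sup (fun ij : Fin n × Fin n => mm ij.1 ij.2 + ni ij.1 * ni ij.1)) + 1
    with hNdef
  have hN1 : 1 ≤ N := by omega
  have hNge : ∀ i j : Fin n, mm i j + ni i * ni i < N := by
    intro i j
    have h2 : mm i j + ni i * ni i ≤
        Finset.univ.sup (fun ij : Fin n × Fin n => mm ij.1 ij.2 + ni ij.1 * ni ij.1) :=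
      Finset.le_sup (f := fun ij : Fin n × Fin n => mm ij.1 ij.2 + ni ij.1 * ni ij.1)
        (Finset.mem_univ (i, j))
    omega
  have hconn : ∀ i j : Fin n, ChainFD f δ N (p i) (p j) := by
    intro i j
    have h1 : ni i * ni i ≤ N - mm i j := by have := hNge i j; omega
    have h2 : ChainFD f δ (N - mm i j) (p i) (p i) := hloopAll i _ h1
    have h3 : N - mm i j + mm i j = N := by have := hNge i j; omega
    rw [← h3]
    exact chainFD_concat h2 (hmmC i j)
  refine ⟨N, hN1, ?_⟩
  intro k hk s
  -- build the pseudo-orbit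
  set q : ℕ → X := fun j => p (s ⟨min j (k - 1), by omega⟩) with hqdef
  have hqchain : ∀ j : ℕ, ChainFD f δ N (q j) (q (j + 1)) := fun j => hconn _ _
  obtain ⟨x, hxpo, hxq⟩ := pseudo_from_chains hN1 q hqchain
  obtain ⟨z, hz⟩ := hshad x hxpo
  refine ⟨z, ?_⟩
  intro j
  have hj : min (j : ℕ) (k - 1) = (j : ℕ) := by
    have := j.isLt
    omega
  have hq : q (j : ℕ) = p (s j) := by
    simp only [hqdef]
    congr 2
    exact Fin.ext hj
  have hd : dist (f^[(j : ℕ) * N] z) (p (s j)) < ε := by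
    have := hz ((j : ℕ) * N)
    rwa [hxq (j : ℕ), hq] at this
  exact hball (s j) (Metric.mem_ball.mpr (lt_of_lt_of_le hd (hεle (s j))))
end

section
/- Let (X_n, f_n), n ≥ 1, be a sequence of dynamical systems on compact metric spaces of diameter at most 1, each strongly mixing, each with the shadowing property, and such that f_n has no point of period n. Then the product system (∏_{n≥1} X_n, ∏_{n≥1} f_n) with the metric d(x,y) = Σ 2^{-n} d_n(x_n, y_n) is strongly mixing, has the shadowing property, and has no periodic points. -/
set_option maxHeartbeats 1600000


open Set Function

variable {X : Type*}

private lemma tsum_bound_aux (f : ℕ → ℝ) (M : ℕ) (c : ℝ) (hc : 0 ≤ c)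
    (h0 : ∀ n, 0 ≤ f n) (hle : ∀ n, f n ≤ (1/2 : ℝ) ^ (n+1))
    (hsmall : ∀ n < M, f n ≤ (1/2 : ℝ) ^ (n+1) * c) :
    ∑' n, f n ≤ c + (1/2 : ℝ) ^ M := by
  have hs2 : Summable (fun n : ℕ => (1/2 : ℝ) ^ (n+1)) := by
    simpa [pow_succ] using summable_geometric_two.mul_right (1/2 : ℝ)
  have hfs : Summable f := Summable.of_nonneg_of_le h0 hle hs2
  have ht2 : ∑' n : ℕ, (1/2 : ℝ) ^ (n+1) = 1 := by
    have h : ∀ n : ℕ, (1/2 : ℝ) ^ (n+1) = (1/2 : ℝ) ^ n * (1/2) := fun n => pow_succ _ _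
    rw [tsum_congr h, tsum_mul_right, tsum_geometric_two]
    norm_num
  rw [← hfs.sum_add_tsum_nat_add M]
  have hgeo : ∑ i ∈ Finset.range M, (1/2 : ℝ) ^ (i+1) ≤ 1 := by
    calc ∑ i ∈ Finset.range M, (1/2 : ℝ) ^ (i+1)
        ≤ ∑' i : ℕ, (1/2 : ℝ) ^ (i+1) :=
          hs2.sum_le_tsum _ (fun i _ => by positivity)
      _ = 1 := ht2
  have hhead : ∑ i ∈ Finset.range M, f i ≤ c := by
    calc ∑ i ∈ Finset.range M, f i
        ≤ ∑ i ∈ Finset.range M, (1/2 : ℝ) ^ (i+1) * c :=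
          Finset.sum_le_sum fun i hi => hsmall i (Finset.mem_range.mp hi)
      _ = (∑ i ∈ Finset.range M, (1/2 : ℝ) ^ (i+1)) * c := by rw [Finset.sum_mul]
      _ ≤ 1 * c := mul_le_mul_of_nonneg_right hgeo hc
      _ = c := one_mul c
  have h2 : ∑' i : ℕ, (1/2 : ℝ) ^ (i+M+1) = (1/2 : ℝ) ^ M := by
    have heq : ∀ i : ℕ, (1/2 : ℝ) ^ (i+M+1) = (1/2 : ℝ) ^ (i+1) * (1/2) ^ M := by
      intro i
      rw [← pow_add]
      ring_nf
    rw [tsum_congr heq, tsum_mul_right, ht2, one_mul]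
  have htail : ∑' i : ℕ, f (i+M) ≤ (1/2 : ℝ) ^ M := by
    have h1 : ∑' i : ℕ, f (i+M) ≤ ∑' i : ℕ, (1/2 : ℝ) ^ (i+M+1) :=
      Summable.tsum_le_tsum (fun i => hle (i+M)) ((summable_nat_add_iff M).mpr hfs)
        ((summable_nat_add_iff M).mpr hs2)
    exact h1.trans (le_of_eq h2)
  linarith

theorem product_system_mixing_shadowing_no_periodic_points
    {Y : ℕ → Type*} [∀ n, MetricSpace (Y n)] [∀ n, CompactSpace (Y n)]
    (g : ∀ n, Y n → Y n) (hg : ∀ n, Continuous (g n))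
    (hdiam : ∀ n, ∀ x y : Y n, dist x y ≤ 1)
    (hmix : ∀ n, StronglyMixing (g n))
    (hshad : ∀ n, HasShadowing (g n))
    (hnoper : ∀ n : ℕ, ∀ y : Y n, (g n)^[n + 1] y ≠ y)
    (F : (∀ n, Y n) → (∀ n, Y n)) (hF : F = fun x n => g n (x n))
    (D : (∀ n, Y n) → (∀ n, Y n) → ℝ)
    (hD : ∀ x y : ∀ n, Y n, D x y = ∑' n : ℕ, (1 / 2 : ℝ) ^ (n + 1) * dist (x n) (y n)) :
    StronglyMixing F ∧
    (∀ ε > (0 : ℝ), ∃ δ > (0 : ℝ), ∀ x : ℕ → (∀ n, Y n),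
      (∀ n : ℕ, D (F (x n)) (x (n + 1)) < δ) →
      ∃ z : ∀ n, Y n, ∀ n : ℕ, D (F^[n] z) (x n) < ε) ∧
    (∀ x : ∀ n, Y n, ∀ p : ℕ, 1 ≤ p → F^[p] x ≠ x) := by
  classical
  subst hF
  have hiter : ∀ (k : ℕ) (x : ∀ n, Y n) (n : ℕ),
      (fun x n => g n (x n))^[k] x n = (g n)^[k] (x n) := by
    intro k
    induction k with
    | zero => intro x n; simp
    | succ k ih =>
      intro x n
      rw [Function.iterate_succ_apply, Function.iterate_succ_apply]
      exact ih _ n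
  have hsummable2 : Summable (fun n : ℕ => (1/2 : ℝ) ^ (n+1)) := by
    simpa [pow_succ] using summable_geometric_two.mul_right (1/2 : ℝ)
  have hsum : ∀ u v : ∀ n, Y n,
      Summable fun n => (1/2 : ℝ) ^ (n+1) * dist (u n) (v n) := by
    intro u v
    refine Summable.of_nonneg_of_le (fun n => by positivity) (fun n => ?_) hsummable2
    calc (1/2 : ℝ) ^ (n+1) * dist (u n) (v n) ≤ (1/2 : ℝ) ^ (n+1) * 1 := by
          apply mul_le_mul_of_nonneg_left (hdiam n _ _) (by positivity)
      _ = (1/2 : ℝ) ^ (n+1) := by ring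
  have htsum2 : ∑' n : ℕ, (1/2 : ℝ) ^ (n+1) = 1 := by
    have : ∀ n : ℕ, (1/2 : ℝ) ^ (n+1) = (1/2 : ℝ) ^ n * (1/2) := fun n => pow_succ _ _
    rw [tsum_congr this, tsum_mul_right, tsum_geometric_two]
    norm_num
  refine ⟨?_, ?_, ?_⟩
  · -- strong mixing
    intro U V hU hUne hV hVne
    obtain ⟨pu, hpu⟩ := hUne
    obtain ⟨pv, hpv⟩ := hVne
    obtain ⟨IU, su, hsu, hUsub⟩ := isOpen_pi_iff.mp hU pu hpu
    obtain ⟨IV, sv, hsv, hVsub⟩ := isOpen_pi_iff.mp hV pv hpv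
    have key : ∀ i ∈ IV, ∃ N : ℕ, ∀ n ≥ N,
        (((g i)^[n] '' (if i ∈ IU then su i else Set.univ)) ∩ sv i).Nonempty := by
      intro i hi
      refine hmix i _ (sv i) ?_ ?_ (hsv i hi).1 ⟨pv i, (hsv i hi).2⟩
      · by_cases h : i ∈ IU
        · simpa [h] using (hsu i h).1
        · simp [h]
      · by_cases h : i ∈ IU
        · exact ⟨pu i, by simpa [h] using (hsu i h).2⟩
        · exact ⟨pu i, by simp [h]⟩
    choose NN hNN using key
    refine ⟨IV.attach.sup (fun i => NN i.1 i.2), fun n hn => ?_⟩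
    have hpts : ∀ i ∈ IV, ∃ a, a ∈ (if i ∈ IU then su i else Set.univ) ∧
        (g i)^[n] a ∈ sv i := by
      intro i hi
      obtain ⟨b, hb1, hb2⟩ := hNN i hi n
        (le_trans (Finset.le_sup (f := fun i : {x // x ∈ IV} => NN i.1 i.2)
          (Finset.mem_attach _ ⟨i, hi⟩)) hn)
      obtain ⟨a, ha, rfl⟩ := hb1
      exact ⟨a, ha, hb2⟩
    choose a ha1 ha2 using hpts
    set w : ∀ i, Y i := fun i => if hi : i ∈ IV then a i hi else pu i with hw
    have hwU : w ∈ U := by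
      apply hUsub
      intro i hiU
      simp only [Finset.coe_sort_coe, Finset.mem_coe] at hiU
      by_cases hiV : i ∈ IV
      · have := ha1 i hiV
        rw [if_pos hiU] at this
        simpa [hw, hiV] using this
      · simpa [hw, hiV] using (hsu i hiU).2
    refine ⟨(fun x n => g n (x n))^[n] w, ⟨w, hwU, rfl⟩, ?_⟩
    apply hVsub
    intro i hiV
    simp only [Finset.coe_sort_coe, Finset.mem_coe] at hiV
    rw [hiter]
    have : w i = a i hiV := by simp [hw, hiV]
    rw [this]
    exact ha2 i hiV
  · -- shadowing
    intro ε hε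
    obtain ⟨m, hm⟩ := exists_pow_lt_of_lt_one (by linarith : (0:ℝ) < ε/2)
      (by norm_num : (1/2 : ℝ) < 1)
    set M := max m 1 with hMdef
    have hM1 : 1 ≤ M := le_max_right _ _
    have hMε : (1/2 : ℝ) ^ M ≤ ε/2 :=
      le_of_lt (lt_of_le_of_lt
        (pow_le_pow_of_le_one (by norm_num) (by norm_num) (le_max_left _ _)) hm)
    have hsh : ∀ n : ℕ, ∃ δ > (0:ℝ), ∀ x, IsPseudoOrbit (g n) δ x →
        ∃ z, Traces (g n) (ε/4) z x := fun n => hshad n (ε/4) (by linarith)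
    choose d hd0 hdsh using hsh
    set δ := (Finset.range M).inf' ⟨0, Finset.mem_range.mpr hM1⟩
      (fun n => (1/2 : ℝ) ^ (n+1) * d n) with hδdef
    have hδ0 : 0 < δ := by
      rw [hδdef]; refine (Finset.lt_inf'_iff ..).mpr ?_
      intro n _
      have := hd0 n
      positivity
    refine ⟨δ, hδ0, fun x hx => ?_⟩
    have hcoord : ∀ n < M, IsPseudoOrbit (g n) (d n) (fun k => x k n) := by
      intro n hn k
      have h1 : (1/2 : ℝ) ^ (n+1) * dist (g n (x k n)) (x (k+1) n)
          ≤ ∑' j : ℕ, (1/2 : ℝ) ^ (j+1) * dist (g j (x k j)) (x (k+1) j) :=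
        Summable.le_tsum (hsum (fun j => g j (x k j)) (x (k+1))) n (fun j _ => by positivity)
      have h2 := hx k
      rw [hD] at h2
      have h3 : (1/2 : ℝ) ^ (n+1) * dist (g n (x k n)) (x (k+1) n)
          < (1/2 : ℝ) ^ (n+1) * d n :=
        lt_of_lt_of_le (lt_of_le_of_lt h1 h2)
          (Finset.inf'_le _ (Finset.mem_range.mpr hn))
      exact (mul_lt_mul_iff_right₀ (by positivity)).mp h3
    have htr : ∀ n : ℕ, ∃ z : Y n, n < M →
        Traces (g n) (ε/4) z (fun k => x k n) := by
      intro n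
      by_cases hn : n < M
      · obtain ⟨z, hz⟩ := hdsh n _ (hcoord n hn)
        exact ⟨z, fun _ => hz⟩
      · exact ⟨x 0 n, fun h => absurd h hn⟩
    choose z hz using htr
    refine ⟨z, fun k => ?_⟩
    rw [hD]
    have hcong : ∑' n : ℕ, (1/2 : ℝ) ^ (n+1) *
          dist ((fun x n => g n (x n))^[k] z n) (x k n)
        = ∑' n : ℕ, (1/2 : ℝ) ^ (n+1) * dist ((g n)^[k] (z n)) (x k n) :=
      tsum_congr fun n => by rw [hiter]
    rw [hcong]
    have hb := tsum_bound_aux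
      (fun n => (1/2 : ℝ) ^ (n+1) * dist ((g n)^[k] (z n)) (x k n)) M (ε/4)
      (by linarith) (fun n => by positivity)
      (fun n => by
        calc (1/2 : ℝ) ^ (n+1) * dist ((g n)^[k] (z n)) (x k n)
            ≤ (1/2 : ℝ) ^ (n+1) * 1 :=
              mul_le_mul_of_nonneg_left (hdiam _ _ _) (by positivity)
          _ = (1/2 : ℝ) ^ (n+1) := mul_one _)
      (fun n hn => le_of_lt (mul_lt_mul_of_pos_left (hz n hn k) (by positivity)))
    have h2M : (1/2 : ℝ) ^ M ≤ ε/2 := hMε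
    linarith
  · -- no periodic points
    intro x p hp hfix
    apply hnoper (p-1) (x (p-1))
    have h : p - 1 + 1 = p := Nat.succ_pred_eq_of_pos hp
    rw [h]
    have := congrFun hfix (p-1)
    rwa [hiter] at this
end
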